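/- arXiv:2212.05990 — 6 statements merged into one kernel-verified Lean document; each statement's English description precedes it below -/
import Mathlib

section
/- The precision of a set of fixed features is not monotone with respect to set inclusion: there exist m, finite domains D_1,…,D_m, a classifier κ : 𝔽 → K, an instance v ∈ 𝔽 with κ(v) = c, and sets S' ⊆ S ⊆ F, such that Prob(κ(x) = c | x_{S'} = v_{S'}) > Prob(κ(x) = c | x_S = v_S). (For example, with m = 2, boolean domains, κ mapping (0,0), (1,0), (1,1) to c and (0,1) to a different class, v = (0,0), S = {1}, S' = ∅, the precisions are 3/4 > 1/2.) -/
/-- Precision is not monotone w.r.t. set inclusion: there is a classifier, an instance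
and sets `S' ⊆ S` such that the precision of `S'` strictly exceeds that of `S`. -/
theorem precision_not_monotone :
    ∃ (m : ℕ), 1 ≤ m ∧
    ∃ (D : Fin m → Type) (_ : ∀ i, Fintype (D i)) (_ : ∀ i, Nonempty (D i))
      (K : Type) (κ : ((i : Fin m) → D i) → K) (v : (i : Fin m) → D i) (c : K),
      κ v = c ∧
      ∃ (S' S : Finset (Fin m)), S' ⊆ S ∧
        (Nat.card {x : (i : Fin m) → D i // κ x = c ∧ ∀ i ∈ S', x i = v i} : ℝ) /
            (Nat.card {x : (i : Fin m) → D i // ∀ i ∈ S', x i = v i} : ℝ) >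
          (Nat.card {x : (i : Fin m) → D i // κ x = c ∧ ∀ i ∈ S, x i = v i} : ℝ) /
            (Nat.card {x : (i : Fin m) → D i // ∀ i ∈ S, x i = v i} : ℝ) := by
  refine ⟨2, by norm_num, fun _ => Bool, fun _ => inferInstance, fun _ => inferInstance,
    Bool, fun x => !((!x 0) && x 1), fun _ => false, true, by decide,
    ∅, {0}, Finset.empty_subset _, ?_⟩
  have h1 : Nat.card {x : (i : Fin 2) → Bool // (!((!x 0) && x 1)) = true ∧
      ∀ i ∈ (∅ : Finset (Fin 2)), x i = false} = 3 := by
    rw [Nat.card_eq_fintype_card]; decide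
  have h2 : Nat.card {x : (i : Fin 2) → Bool // ∀ i ∈ (∅ : Finset (Fin 2)), x i = false} = 4 := by
    rw [Nat.card_eq_fintype_card]; decide
  have h3 : Nat.card {x : (i : Fin 2) → Bool // (!((!x 0) && x 1)) = true ∧
      ∀ i ∈ ({0} : Finset (Fin 2)), x i = false} = 1 := by
    rw [Nat.card_eq_fintype_card]; decide
  have h4 : Nat.card {x : (i : Fin 2) → Bool // ∀ i ∈ ({0} : Finset (Fin 2)), x i = false} = 2 := by
    rw [Nat.card_eq_fintype_card]; decide
  rw [h1, h2, h3, h4]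
  norm_num
end

section
/- Conditional probability for a classifier given by a partition into boxes (the decision-tree formula, eq. (18)): suppose B_1, …, B_n are pairwise disjoint boxes, with B_k = {x ∈ 𝔽 : x_i ∈ E_{i,k} for all i ∈ F}, whose union is 𝔽, and κ is constant on each B_k with value c_k; let v ∈ 𝔽 with κ(v) = c. For X ⊆ F write #_k = ∏_{i ∈ X} |E_{i,k} ∩ {v_i}| · ∏_{i ∉ X} |E_{i,k}|. Then Σ_{k=1}^n #_k = ∏_{i ∉ X} |D_i| > 0 and Prob(κ(x) = c | x_X = v_X) = (Σ_{k : c_k = c} #_k) / (Σ_{k=1}^n #_k). -/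
/-- Conditional probability for a classifier given by a partition of feature space into
boxes on which the classifier is constant (the decision-tree formula, eq. (18)):
the total count `Σ_k #_k` equals `∏_{i ∉ X} |D_i| > 0`, and
`Prob(κ(x) = c | x_X = v_X) = (Σ_{k : c_k = c} #_k) / (Σ_k #_k)`. -/
theorem box_partition_conditional_probability
    {m : ℕ} (hm : 1 ≤ m) (D : Fin m → Type) [∀ i, Fintype (D i)] [∀ i, Nonempty (D i)]
    [∀ i, DecidableEq (D i)]
    {K : Type} [DecidableEq K] (κ : ((i : Fin m) → D i) → K)
    (v : (i : Fin m) → D i) (c : K) (hv : κ v = c)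
    (n : ℕ) (E : Fin n → (i : Fin m) → Finset (D i)) (cls : Fin n → K)
    (hdisj : ∀ k l : Fin n, k ≠ l → ∀ x : (i : Fin m) → D i,
      ¬ ((∀ i, x i ∈ E k i) ∧ (∀ i, x i ∈ E l i)))
    (hcover : ∀ x : (i : Fin m) → D i, ∃ k : Fin n, ∀ i, x i ∈ E k i)
    (hconst : ∀ (k : Fin n) (x : (i : Fin m) → D i), (∀ i, x i ∈ E k i) → κ x = cls k)
    (X : Finset (Fin m)) :
    (∑ k : Fin n, (∏ i ∈ X, (E k i ∩ {v i}).card) * ∏ i ∈ Xᶜ, (E k i).card)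
        = ∏ i ∈ Xᶜ, Fintype.card (D i) ∧
    0 < ∏ i ∈ Xᶜ, Fintype.card (D i) ∧
    (Nat.card {x : (i : Fin m) → D i // κ x = c ∧ ∀ i ∈ X, x i = v i} : ℝ) /
        (Nat.card {x : (i : Fin m) → D i // ∀ i ∈ X, x i = v i} : ℝ) =
      ((∑ k ∈ Finset.univ.filter (fun k : Fin n => cls k = c),
          (∏ i ∈ X, (E k i ∩ {v i}).card) * ∏ i ∈ Xᶜ, (E k i).card : ℕ) : ℝ) /
      ((∑ k : Fin n,
          (∏ i ∈ X, (E k i ∩ {v i}).card) * ∏ i ∈ Xᶜ, (E k i).card : ℕ) : ℝ) := by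
  classical
  -- unique box containing each point
  have hu : ∀ x : (i : Fin m) → D i, ∃! k : Fin n, ∀ i, x i ∈ E k i := by
    intro x
    obtain ⟨k, hk⟩ := hcover x
    refine ⟨k, hk, fun l hl => ?_⟩
    by_contra hne
    exact hdisj l k hne x ⟨hl, hk⟩
  set f : ((i : Fin m) → D i) → Fin n := fun x => (hu x).choose with hfdef
  have hf1 : ∀ x, ∀ i, x i ∈ E (f x) i := fun x => (hu x).choose_spec.1
  have hf2 : ∀ x k, (∀ i, x i ∈ E k i) → f x = k :=
    fun x k h => ((hu x).choose_spec.2 k h).symm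
  -- the boxes restricted to the condition set
  set T : Fin n → (i : Fin m) → Finset (D i) :=
    fun k i => if i ∈ X then E k i ∩ {v i} else E k i with hTdef
  have hTcard : ∀ k, (Fintype.piFinset (T k)).card
      = (∏ i ∈ X, (E k i ∩ {v i}).card) * ∏ i ∈ Xᶜ, (E k i).card := by
    intro k
    rw [Fintype.card_piFinset, ← Finset.prod_mul_prod_compl X]
    congr 1
    · exact Finset.prod_congr rfl fun i hi => by simp [hTdef, hi]
    · exact Finset.prod_congr rfl fun i hi => by
        simp [hTdef, Finset.mem_compl.mp hi]
  -- the condition set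
  set A : Finset ((i : Fin m) → D i) :=
    Fintype.piFinset (fun i => if i ∈ X then ({v i} : Finset (D i)) else Finset.univ)
    with hAdef
  have hA : ∀ x, x ∈ A ↔ ∀ i ∈ X, x i = v i := by
    intro x
    simp only [hAdef, Fintype.mem_piFinset]
    constructor
    · intro h i hi
      have := h i
      simpa [hi] using this
    · intro h i
      by_cases hi : i ∈ X <;> simp [hi, h]
  have hAcard : A.card = ∏ i ∈ Xᶜ, Fintype.card (D i) := by
    rw [hAdef, Fintype.card_piFinset, ← Finset.prod_mul_prod_compl X]
    have h1 : (∏ i ∈ X, (if i ∈ X then ({v i} : Finset (D i)) else Finset.univ).card) = 1 := by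
      apply Finset.prod_eq_one
      intro i hi
      simp [hi]
    rw [h1, one_mul]
    exact Finset.prod_congr rfl fun i hi => by
      simp [Finset.mem_compl.mp hi, Finset.card_univ]
  -- fibers of f on A are the restricted boxes
  have hfiber : ∀ k, A.filter (fun x => f x = k) = Fintype.piFinset (T k) := by
    intro k
    ext x
    simp only [Finset.mem_filter, Fintype.mem_piFinset, hA, hTdef]
    constructor
    · rintro ⟨hx, hfx⟩ i
      have hE : x i ∈ E k i := hfx ▸ hf1 x i
      by_cases hi : i ∈ X
      · rw [if_pos hi]
        exact Finset.mem_inter.mpr ⟨hE, Finset.mem_singleton.mpr (hx i hi)⟩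
      · simp [hi, hE]
    · intro h
      have hE : ∀ i, x i ∈ E k i := by
        intro i
        have := h i
        by_cases hi : i ∈ X
        · simp only [hi, if_true, Finset.mem_inter] at this
          exact this.1
        · simpa [hi] using this
      refine ⟨fun i hi => ?_, hf2 x k hE⟩
      have := h i
      simp only [hi, if_true, Finset.mem_inter, Finset.mem_singleton] at this
      exact this.2
  -- total count
  have htotal : A.card = ∑ k : Fin n,
      (∏ i ∈ X, (E k i ∩ {v i}).card) * ∏ i ∈ Xᶜ, (E k i).card := by
    rw [Finset.card_eq_sum_card_fiberwise (f := f) (t := Finset.univ)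
      (fun x _ => Finset.mem_univ _)]
    exact Finset.sum_congr rfl fun k _ => by rw [hfiber k, hTcard k]
  have hpos : 0 < ∏ i ∈ Xᶜ, Fintype.card (D i) :=
    Finset.prod_pos fun i _ => Fintype.card_pos
  refine ⟨htotal ▸ hAcard, hpos, ?_⟩
  -- the numerator set
  have hnum : (A.filter (fun x => κ x = c)).card
      = ∑ k ∈ Finset.univ.filter (fun k : Fin n => cls k = c),
          (∏ i ∈ X, (E k i ∩ {v i}).card) * ∏ i ∈ Xᶜ, (E k i).card := by
    rw [Finset.card_eq_sum_card_fiberwise (f := f) (t := Finset.univ)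
      (fun x _ => Finset.mem_univ _), Finset.sum_filter]
    refine Finset.sum_congr rfl fun k _ => ?_
    have hcomm : (A.filter (fun x => κ x = c)).filter (fun x => f x = k)
        = (A.filter (fun x => f x = k)).filter (fun x => κ x = c) := by
      simp [Finset.filter_filter, and_comm]
    rw [hcomm, hfiber k]
    by_cases hc : cls k = c
    · rw [if_pos hc]
      rw [Finset.filter_true_of_mem, hTcard k]
      intro x hx
      have hE : ∀ i, x i ∈ E k i := by
        intro i
        have := Fintype.mem_piFinset.mp hx i
        by_cases hi : i ∈ X
        · simp only [hTdef, hi, if_true, Finset.mem_inter] at this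
          exact this.1
        · simpa [hTdef, hi] using this
      rw [hconst k x hE, hc]
    · rw [if_neg hc]
      rw [Finset.filter_false_of_mem, Finset.card_empty]
      intro x hx
      have hE : ∀ i, x i ∈ E k i := by
        intro i
        have := Fintype.mem_piFinset.mp hx i
        by_cases hi : i ∈ X
        · simp only [hTdef, hi, if_true, Finset.mem_inter] at this
          exact this.1
        · simpa [hTdef, hi] using this
      rw [hconst k x hE]
      exact hc
  -- identify Nat.card with Finset cards
  have hcard1 : Nat.card {x : (i : Fin m) → D i // κ x = c ∧ ∀ i ∈ X, x i = v i}
      = (A.filter (fun x => κ x = c)).card := by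
    rw [Nat.card_eq_fintype_card, Fintype.card_subtype]
    congr 1
    ext x
    simp [Finset.mem_filter, hA x, and_comm]
  have hcard2 : Nat.card {x : (i : Fin m) → D i // ∀ i ∈ X, x i = v i} = A.card := by
    rw [Nat.card_eq_fintype_card, Fintype.card_subtype]
    congr 1
    ext x
    simp [hA x]
  rw [hcard1, hcard2, hnum, htotal]
end

section
/- Correctness of the model-counting condition for weak PAXp's of decision trees (eq. (22)): with the hypotheses and notation of the box-partition setting (pairwise disjoint boxes B_1,…,B_n with union 𝔽, κ constant c_k on B_k, v ∈ 𝔽 with κ(v) = c, and #_k = ∏_{i ∈ X} |E_{i,k} ∩ {v_i}| · ∏_{i ∉ X} |E_{i,k}|), for every δ ∈ [0,1] the set X ⊆ F satisfies WeakPAXp(X; δ) if and only if Σ_{k : c_k = c} #_k ≥ δ · Σ_{k=1}^n #_k. -/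
/-- Correctness of the model-counting condition for weak PAXp's of decision trees
(eq. (22)): in the box-partition setting, `X` is a weak PAXp for threshold `δ`
iff `Σ_{k : c_k = c} #_k ≥ δ · Σ_k #_k`. -/
theorem box_partition_weak_paxp_iff
    {m : ℕ} (hm : 1 ≤ m) (D : Fin m → Type) [∀ i, Fintype (D i)] [∀ i, Nonempty (D i)]
    [∀ i, DecidableEq (D i)]
    {K : Type} [DecidableEq K] (κ : ((i : Fin m) → D i) → K)
    (v : (i : Fin m) → D i) (c : K) (hv : κ v = c)
    (n : ℕ) (E : Fin n → (i : Fin m) → Finset (D i)) (cls : Fin n → K)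
    (hdisj : ∀ k l : Fin n, k ≠ l → ∀ x : (i : Fin m) → D i,
      ¬ ((∀ i, x i ∈ E k i) ∧ (∀ i, x i ∈ E l i)))
    (hcover : ∀ x : (i : Fin m) → D i, ∃ k : Fin n, ∀ i, x i ∈ E k i)
    (hconst : ∀ (k : Fin n) (x : (i : Fin m) → D i), (∀ i, x i ∈ E k i) → κ x = cls k)
    (δ : ℝ) (hδ0 : 0 ≤ δ) (hδ1 : δ ≤ 1)
    (X : Finset (Fin m)) :
    ((Nat.card {x : (i : Fin m) → D i // κ x = c ∧ ∀ i ∈ X, x i = v i} : ℝ) ≥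
        δ * (Nat.card {x : (i : Fin m) → D i // ∀ i ∈ X, x i = v i} : ℝ)) ↔
      ((∑ k ∈ Finset.univ.filter (fun k : Fin n => cls k = c),
          (∏ i ∈ X, (E k i ∩ {v i}).card) * ∏ i ∈ Xᶜ, (E k i).card : ℕ) : ℝ) ≥
        δ * ((∑ k : Fin n,
          (∏ i ∈ X, (E k i ∩ {v i}).card) * ∏ i ∈ Xᶜ, (E k i).card : ℕ) : ℝ) := by
  classical
  set T : Fin n → Finset ((i : Fin m) → D i) :=
    fun k => Fintype.piFinset (fun i => if i ∈ X then E k i ∩ {v i} else E k i) with hT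
  have memT : ∀ (k : Fin n) (x : (i : Fin m) → D i),
      x ∈ T k ↔ (∀ i, x i ∈ E k i) ∧ (∀ i ∈ X, x i = v i) := by
    intro k x
    simp only [hT, Fintype.mem_piFinset]
    constructor
    · intro h
      constructor
      · intro i
        have hi := h i
        split_ifs at hi with hXi
        · exact (Finset.mem_inter.mp hi).1
        · exact hi
      · intro i hXi
        have hi := h i
        rw [if_pos hXi] at hi
        simpa using (Finset.mem_inter.mp hi).2
    · rintro ⟨h1, h2⟩ i
      split_ifs with hXi
      · exact Finset.mem_inter.mpr ⟨h1 i, by simpa using h2 i hXi⟩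
      · exact h1 i
  have cardT : ∀ k, (T k).card =
      (∏ i ∈ X, (E k i ∩ {v i}).card) * ∏ i ∈ Xᶜ, (E k i).card := by
    intro k
    rw [hT]
    rw [Fintype.card_piFinset, ← Finset.prod_mul_prod_compl X]
    congr 1
    · exact Finset.prod_congr rfl (fun i hi => by rw [if_pos hi])
    · exact Finset.prod_congr rfl (fun i hi => by
        rw [if_neg (by simpa using hi)])
  have hdisjT : ∀ k l : Fin n, k ≠ l → Disjoint (T k) (T l) := by
    intro k l hkl
    rw [Finset.disjoint_left]
    intro x hxk hxl
    exact hdisj k l hkl x ⟨((memT k x).mp hxk).1, ((memT l x).mp hxl).1⟩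
  have card1 : Nat.card {x : (i : Fin m) → D i // ∀ i ∈ X, x i = v i}
      = ∑ k : Fin n, (∏ i ∈ X, (E k i ∩ {v i}).card) * ∏ i ∈ Xᶜ, (E k i).card := by
    rw [Nat.card_eq_fintype_card, Fintype.card_subtype]
    have heq : Finset.univ.filter (fun x : (i : Fin m) → D i => ∀ i ∈ X, x i = v i)
        = Finset.univ.biUnion T := by
      ext x
      simp only [Finset.mem_filter, Finset.mem_univ, true_and, Finset.mem_biUnion]
      constructor
      · intro hx
        obtain ⟨k, hk⟩ := hcover x
        exact ⟨k, (memT k x).mpr ⟨hk, hx⟩⟩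
      · rintro ⟨k, hk⟩
        exact ((memT k x).mp hk).2
    rw [heq, Finset.card_biUnion (fun k _ l _ h => hdisjT k l h)]
    exact Finset.sum_congr rfl (fun k _ => cardT k)
  have card2 : Nat.card {x : (i : Fin m) → D i // κ x = c ∧ ∀ i ∈ X, x i = v i}
      = ∑ k ∈ Finset.univ.filter (fun k : Fin n => cls k = c),
          (∏ i ∈ X, (E k i ∩ {v i}).card) * ∏ i ∈ Xᶜ, (E k i).card := by
    rw [Nat.card_eq_fintype_card, Fintype.card_subtype]
    have heq : Finset.univ.filter
          (fun x : (i : Fin m) → D i => κ x = c ∧ ∀ i ∈ X, x i = v i)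
        = (Finset.univ.filter (fun k : Fin n => cls k = c)).biUnion T := by
      ext x
      simp only [Finset.mem_filter, Finset.mem_univ, true_and, Finset.mem_biUnion]
      constructor
      · rintro ⟨hκ, hx⟩
        obtain ⟨k, hk⟩ := hcover x
        refine ⟨k, ?_, (memT k x).mpr ⟨hk, hx⟩⟩
        rw [← hconst k x hk]; exact hκ
      · rintro ⟨k, hkc, hk⟩
        obtain ⟨hbox, hx⟩ := (memT k x).mp hk
        exact ⟨(hconst k x hbox).trans hkc, hx⟩
    rw [heq, Finset.card_biUnion (fun k _ l _ h => hdisjT k l h)]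
    exact Finset.sum_congr rfl (fun k _ => cardT k)
  rw [card1, card2]
end

section
/- If B_1, …, B_n are pairwise disjoint boxes with union 𝔽 on which κ is constant with values c_1,…,c_n, v ∈ 𝔽 lies in B_t, and c_t = c, then the set X = {i ∈ F : E_{i,t} ≠ D_i} of features actually restricted along B_t is a weak AXp for (κ, v, c): every x ∈ 𝔽 with x_i = v_i for all i ∈ X satisfies κ(x) = c. (This justifies initializing the deletion-based AXp algorithm for decision trees with the features tested on the path consistent with v.) -/
/-- If `v` lies in a box `B_t` of a box-partition of feature space on which `κ` is
constant with value `c`, then the set of features actually restricted along `B_t`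
(those with `E_{i,t} ≠ D_i`) is a weak AXp for `(κ, v, c)`. -/
theorem path_features_weak_axp
    {m : ℕ} (hm : 1 ≤ m) (D : Fin m → Type) [∀ i, Fintype (D i)] [∀ i, Nonempty (D i)]
    [∀ i, DecidableEq (D i)]
    {K : Type} (κ : ((i : Fin m) → D i) → K)
    (v : (i : Fin m) → D i) (c : K) (hv : κ v = c)
    (n : ℕ) (E : Fin n → (i : Fin m) → Finset (D i)) (cls : Fin n → K)
    (hdisj : ∀ k l : Fin n, k ≠ l → ∀ x : (i : Fin m) → D i,
      ¬ ((∀ i, x i ∈ E k i) ∧ (∀ i, x i ∈ E l i)))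
    (hcover : ∀ x : (i : Fin m) → D i, ∃ k : Fin n, ∀ i, x i ∈ E k i)
    (hconst : ∀ (k : Fin n) (x : (i : Fin m) → D i), (∀ i, x i ∈ E k i) → κ x = cls k)
    (t : Fin n) (hvt : ∀ i, v i ∈ E t i) (hct : cls t = c) :
    ∀ x : (i : Fin m) → D i,
      (∀ i ∈ Finset.univ.filter (fun i : Fin m => E t i ≠ Finset.univ), x i = v i) →
        κ x = c := by
  intro x hx
  have hxE : ∀ i, x i ∈ E t i := by
    intro i
    by_cases h : E t i = Finset.univ
    · simp [h]
    · rw [hx i (by simp [h])]; exact hvt i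
  rw [hconst t x hxE, hct]
end

section
/- Characterization of weak AXp's of an extended linear classifier (eq. (36)–(39)): let ν(x) = w_0 + Σ_{i=1}^m u_i(x_i) with w_0 ∈ ℝ and u_i : D_i → ℝ, let κ(x) = ⊕ if ν(x) > 0 and κ(x) = ⊖ otherwise, and let a ∈ 𝔽 with ν(a) > 0 (so κ(a) = ⊕). Set δ_i = u_i(a_i) − min_{u ∈ D_i} u_i(u) ≥ 0 and Φ = Σ_{i=1}^m δ_i − ν(a). Then for every X ⊆ F the following are equivalent: (i) every x ∈ 𝔽 with x_i = a_i for all i ∈ X satisfies ν(x) > 0 (X is a weak AXp); (ii) w_0 + Σ_{i ∈ X} u_i(a_i) + Σ_{i ∉ X} min_{u ∈ D_i} u_i(u) > 0; (iii) Σ_{i ∈ X} δ_i > Φ. -/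
/-- Characterization of weak AXp's of an extended linear classifier (eqs. (36)–(39)):
with `ν(x) = w₀ + Σᵢ uᵢ(xᵢ)`, instance `a` with `ν(a) > 0`,
`δᵢ = uᵢ(aᵢ) − min_{u ∈ Dᵢ} uᵢ(u) ≥ 0` and `Φ = Σᵢ δᵢ − ν(a)`, a set `X` is a weak AXp
iff `w₀ + Σ_{i ∈ X} uᵢ(aᵢ) + Σ_{i ∉ X} min uᵢ > 0` iff `Σ_{i ∈ X} δᵢ > Φ`. -/
theorem xlc_weak_axp_characterization
    {m : ℕ} (hm : 1 ≤ m) (D : Fin m → Type) [∀ i, Fintype (D i)] [∀ i, Nonempty (D i)]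
    (w0 : ℝ) (u : (i : Fin m) → D i → ℝ)
    (a : (i : Fin m) → D i)
    (ha : w0 + ∑ i, u i (a i) > 0)
    (X : Finset (Fin m)) :
    (∀ i, 0 ≤ u i (a i) - Finset.univ.inf' Finset.univ_nonempty (u i)) ∧
    ((∀ x : (i : Fin m) → D i, (∀ i ∈ X, x i = a i) → w0 + ∑ i, u i (x i) > 0) ↔
      w0 + ∑ i ∈ X, u i (a i) +
        ∑ i ∈ Xᶜ, Finset.univ.inf' Finset.univ_nonempty (u i) > 0) ∧
    ((w0 + ∑ i ∈ X, u i (a i) +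
        ∑ i ∈ Xᶜ, Finset.univ.inf' Finset.univ_nonempty (u i) > 0) ↔
      ∑ i ∈ X, (u i (a i) - Finset.univ.inf' Finset.univ_nonempty (u i)) >
        (∑ i, (u i (a i) - Finset.univ.inf' Finset.univ_nonempty (u i))) -
          (w0 + ∑ i, u i (a i))) := by
  set inf : (i : Fin m) → ℝ :=
    fun i => Finset.univ.inf' Finset.univ_nonempty (u i) with hinf
  have hle : ∀ i (b : D i), inf i ≤ u i b := fun i b =>
    Finset.inf'_le _ (Finset.mem_univ b)
  -- a minimizer for each i
  have hmin : ∀ i, ∃ b : D i, u i b = inf i := by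
    intro i
    obtain ⟨b, _, hb⟩ := Finset.exists_mem_eq_inf' Finset.univ_nonempty (u i)
    exact ⟨b, hb.symm⟩
  choose bmin hbmin using hmin
  have hsplit : ∀ (x : (i : Fin m) → D i),
      ∑ i, u i (x i) = ∑ i ∈ X, u i (x i) + ∑ i ∈ Xᶜ, u i (x i) := by
    intro x
    rw [← Finset.sum_add_sum_compl X]
  refine ⟨fun i => sub_nonneg.mpr (hle i (a i)), ?_, ?_⟩
  · constructor
    · intro h
      have := h (fun i => if hi : i ∈ X then a i else bmin i)
        (fun i hi => by simp [hi])
      calc w0 + ∑ i ∈ X, u i (a i) + ∑ i ∈ Xᶜ, inf i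
          = w0 + ∑ i, u i (if hi : i ∈ X then a i else bmin i) := by
            rw [hsplit]
            have h1 : ∑ i ∈ X, u i (if hi : i ∈ X then a i else bmin i)
                = ∑ i ∈ X, u i (a i) :=
              Finset.sum_congr rfl (fun i hi => by simp [hi])
            have h2 : ∑ i ∈ Xᶜ, u i (if hi : i ∈ X then a i else bmin i)
                = ∑ i ∈ Xᶜ, inf i :=
              Finset.sum_congr rfl (fun i hi => by
                simp [Finset.mem_compl.mp hi, hbmin])
            rw [h1, h2]; ring
        _ > 0 := this
    · intro h x hx
      have h1 : ∑ i ∈ X, u i (x i) = ∑ i ∈ X, u i (a i) :=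
        Finset.sum_congr rfl (fun i hi => by rw [hx i hi])
      have h2 : ∑ i ∈ Xᶜ, inf i ≤ ∑ i ∈ Xᶜ, u i (x i) :=
        Finset.sum_le_sum (fun i _ => hle i (x i))
      rw [hsplit, h1]
      linarith
  · have e1 : ∑ i, (u i (a i) - inf i)
        = ∑ i ∈ X, (u i (a i) - inf i) + ∑ i ∈ Xᶜ, (u i (a i) - inf i) :=
      (Finset.sum_add_sum_compl X _).symm
    have e2 : ∑ i ∈ X, (u i (a i) - inf i)
        = ∑ i ∈ X, u i (a i) - ∑ i ∈ X, inf i := Finset.sum_sub_distrib _ _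
    have e3 : ∑ i ∈ Xᶜ, (u i (a i) - inf i)
        = ∑ i ∈ Xᶜ, u i (a i) - ∑ i ∈ Xᶜ, inf i := Finset.sum_sub_distrib _ _
    have e4 := hsplit a
    constructor <;> intro h <;> [skip; skip] <;>
      (rw [e1, e2, e3] at * <;> linarith)
end

section
/- Minimum-size abductive explanations of extended linear classifiers: with ν(x) = w_0 + Σ_{i=1}^m u_i(x_i), κ(x) = ⊕ iff ν(x) > 0, a ∈ 𝔽 with ν(a) > 0, δ_i = u_i(a_i) − min_{u ∈ D_i} u_i(u) and Φ = Σ_{i=1}^m δ_i − ν(a), the minimum cardinality of a weak AXp for (κ, a, ⊕) equals the least k such that the sum of the k largest values among δ_1, …, δ_m exceeds Φ; such a k exists since the full set F is a weak AXp (Σ_{i=1}^m δ_i − Φ = ν(a) > 0). -/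
lemma strictMono_fin_le {n : ℕ} {g : Fin n → ℕ} (hg : StrictMono g) :
    ∀ j : Fin n, (j : ℕ) ≤ g j := by
  have : ∀ k : ℕ, ∀ j : Fin n, (j : ℕ) = k → k ≤ g j := by
    intro k
    induction k with
    | zero => intro j _; exact Nat.zero_le _
    | succ k ih =>
      intro j hj
      have hk : k < n := by omega
      have h1 : k ≤ g ⟨k, hk⟩ := ih ⟨k, hk⟩ rfl
      have h2 : g ⟨k, hk⟩ < g j := hg (by simp [Fin.lt_def, hj])
      omega
  exact fun j => this _ j rfl

lemma filter_lt_eq_map {m n : ℕ} (hnm : n ≤ m) :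
    Finset.univ.filter (fun i : Fin m => (i : ℕ) < n)
      = Finset.univ.map (Fin.castLEEmb hnm) := by
  ext x
  simp only [Finset.mem_map, Finset.mem_univ, true_and, Finset.mem_filter]
  constructor
  · intro hx; exact ⟨⟨x, hx⟩, rfl⟩
  · rintro ⟨j, rfl⟩; simp

lemma antitone_sum_le {m n : ℕ} (f : Fin m → ℝ) (hf : Antitone f)
    (S : Finset (Fin m)) (hS : S.card = n) :
    ∑ i ∈ S, f i ≤ ∑ i ∈ Finset.univ.filter (fun i : Fin m => (i : ℕ) < n), f i := by
  have hnm : n ≤ m := by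
    simpa [hS] using Finset.card_le_card (Finset.subset_univ S)
  have key : ∀ j : Fin n, (j : ℕ) ≤ ((S.orderEmbOfFin hS j : Fin m) : ℕ) :=
    strictMono_fin_le (fun i j hij =>
      (Fin.lt_iff_val_lt_val.mp ((S.orderEmbOfFin hS).strictMono hij)))
  have h1 : S = Finset.univ.map (S.orderEmbOfFin hS).toEmbedding := by
    ext x
    simp only [Finset.mem_map, Finset.mem_univ, true_and]
    constructor
    · intro hx
      obtain ⟨j, hj⟩ := Set.mem_range.mp (by
        rw [Finset.range_orderEmbOfFin S hS]; exact hx : x ∈ Set.range (S.orderEmbOfFin hS))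
      exact ⟨j, hj⟩
    · rintro ⟨j, rfl⟩; exact Finset.orderEmbOfFin_mem S hS j
  rw [h1, filter_lt_eq_map hnm, Finset.sum_map, Finset.sum_map]
  exact Finset.sum_le_sum fun j _ => hf (key j)

/-- Minimum-size abductive explanations of extended linear classifiers: with
`ν(x) = w₀ + Σᵢ uᵢ(xᵢ)`, prediction `⊕` iff `ν(x) > 0`, instance `a` with `ν(a) > 0`,
`δᵢ = uᵢ(aᵢ) − min_{u ∈ Dᵢ} uᵢ(u)` and `Φ = Σᵢ δᵢ − ν(a)`, the minimum cardinality of a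
weak AXp for `(κ, a, ⊕)` equals the least `k` such that the sum of the `k` largest
values among `δ₁,…,δ_m` (sorted by the permutation `σ`) exceeds `Φ`; such `k` exists
since the full feature set is a weak AXp. -/
theorem xlc_min_size_weak_axp
    {m : ℕ} (hm : 1 ≤ m) (D : Fin m → Type) [∀ i, Fintype (D i)] [∀ i, Nonempty (D i)]
    (w0 : ℝ) (u : (i : Fin m) → D i → ℝ)
    (a : (i : Fin m) → D i)
    (ha : w0 + ∑ i, u i (a i) > 0)
    (σ : Equiv.Perm (Fin m))
    (hσ : Antitone (fun i =>
      u (σ i) (a (σ i)) - Finset.univ.inf' Finset.univ_nonempty (u (σ i)))) :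
    ∃ k : ℕ,
      IsLeast {n : ℕ | n ≤ m ∧
        (∑ i, (u i (a i) - Finset.univ.inf' Finset.univ_nonempty (u i))) -
            (w0 + ∑ i, u i (a i)) <
          ∑ i ∈ Finset.univ.filter (fun i : Fin m => (i : ℕ) < n),
            (u (σ i) (a (σ i)) - Finset.univ.inf' Finset.univ_nonempty (u (σ i)))} k ∧
      IsLeast {n : ℕ | ∃ X : Finset (Fin m), X.card = n ∧
        ∀ x : (i : Fin m) → D i, (∀ i ∈ X, x i = a i) → w0 + ∑ i, u i (x i) > 0} k := by
  classical
  set δ : Fin m → ℝ := fun i => u i (a i) - Finset.univ.inf' Finset.univ_nonempty (u i)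
    with hδ
  set Φ : ℝ := (∑ i, δ i) - (w0 + ∑ i, u i (a i)) with hΦ
  -- split of sums over X and its complement
  have split : ∀ (X : Finset (Fin m)) (g : Fin m → ℝ),
      ∑ i, g i = ∑ i ∈ X, g i + ∑ i ∈ Xᶜ, g i := by
    intro X g
    rw [Finset.sum_add_sum_compl]
  -- equivalence: weak AXp iff Φ < ∑_{i ∈ X} δ i
  have equiv : ∀ X : Finset (Fin m),
      ((∀ x : (i : Fin m) → D i, (∀ i ∈ X, x i = a i) → w0 + ∑ i, u i (x i) > 0)
        ↔ Φ < ∑ i ∈ X, δ i) := by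
    intro X
    have hsplitδ := split X δ
    have hsplitu := split X (fun i => u i (a i))
    constructor
    · intro hax
      -- choose worst-case x
      choose b hb using fun i : Fin m =>
        Finset.exists_mem_eq_inf' (Finset.univ_nonempty (α := D i)) (u i)
      set x : (i : Fin m) → D i := fun i => if i ∈ X then a i else b i with hx
      have hxa : ∀ i ∈ X, x i = a i := by intro i hi; simp [hx, hi]
      have hval := hax x hxa
      have hsum : ∑ i, u i (x i) = ∑ i ∈ X, u i (a i)
          + ∑ i ∈ Xᶜ, Finset.univ.inf' Finset.univ_nonempty (u i) := by
        rw [split X (fun i => u i (x i))]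
        congr 1
        · exact Finset.sum_congr rfl fun i hi => by rw [hxa i hi]
        · refine Finset.sum_congr rfl fun i hi => ?_
          rw [Finset.mem_compl] at hi
          simp [hx, hi, ← (hb i).2]
      rw [hsum] at hval
      have : ∑ i ∈ Xᶜ, δ i
          = ∑ i ∈ Xᶜ, u i (a i) - ∑ i ∈ Xᶜ, Finset.univ.inf' Finset.univ_nonempty (u i) := by
        rw [← Finset.sum_sub_distrib]
      linarith
    · intro hlt x hxa
      have hbound : ∀ i : Fin m, Finset.univ.inf' Finset.univ_nonempty (u i) ≤ u i (x i) :=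
        fun i => Finset.inf'_le _ (Finset.mem_univ _)
      have hsum : ∑ i ∈ X, u i (a i)
          + ∑ i ∈ Xᶜ, Finset.univ.inf' Finset.univ_nonempty (u i) ≤ ∑ i, u i (x i) := by
        rw [split X (fun i => u i (x i))]
        apply add_le_add
        · exact le_of_eq (Finset.sum_congr rfl fun i hi => by rw [hxa i hi])
        · exact Finset.sum_le_sum fun i _ => hbound i
      have : ∑ i ∈ Xᶜ, δ i
          = ∑ i ∈ Xᶜ, u i (a i) - ∑ i ∈ Xᶜ, Finset.univ.inf' Finset.univ_nonempty (u i) := by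
        rw [← Finset.sum_sub_distrib]
      linarith
  -- the full set works
  have hPm : m ≤ m ∧ Φ < ∑ i ∈ Finset.univ.filter (fun i : Fin m => (i : ℕ) < m),
      δ (σ i) := by
    refine ⟨le_rfl, ?_⟩
    have hfull : Finset.univ.filter (fun i : Fin m => (i : ℕ) < m) = Finset.univ := by
      ext i; simp [i.isLt]
    rw [hfull, Equiv.sum_comp σ δ]
    simp only [hΦ]; linarith
  have hex : ∃ n : ℕ, n ≤ m ∧ Φ < ∑ i ∈ Finset.univ.filter (fun i : Fin m => (i : ℕ) < n),
      δ (σ i) := ⟨m, hPm⟩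
  set k := Nat.find hex with hk
  refine ⟨k, ⟨Nat.find_spec hex, fun n hn => Nat.find_min' hex hn⟩, ?_, ?_⟩
  · -- k is achieved by X = σ '' {i < k}
    obtain ⟨hkm, hkΦ⟩ := Nat.find_spec hex
    refine ⟨(Finset.univ.filter (fun i : Fin m => (i : ℕ) < k)).image σ, ?_, ?_⟩
    · rw [Finset.card_image_of_injective _ σ.injective, filter_lt_eq_map hkm,
        Finset.card_map, Finset.card_univ, Fintype.card_fin]
    · rw [equiv]
      rwa [Finset.sum_image (by intro x _ y _ h; exact σ.injective h)]
  · -- lower bound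
    rintro n ⟨X, hcard, hax⟩
    have hΦX : Φ < ∑ i ∈ X, δ i := (equiv X).mp hax
    have hS : (X.image σ.symm).card = n := by
      rw [Finset.card_image_of_injective _ σ.symm.injective, hcard]
    have hle : ∑ i ∈ X.image σ.symm, δ (σ i)
        ≤ ∑ i ∈ Finset.univ.filter (fun i : Fin m => (i : ℕ) < n), δ (σ i) :=
      antitone_sum_le _ hσ _ hS
    have heq : ∑ i ∈ X.image σ.symm, δ (σ i) = ∑ i ∈ X, δ i := by
      rw [Finset.sum_image (by intro x _ y _ h; exact σ.symm.injective h)]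
      exact Finset.sum_congr rfl fun i _ => by rw [Equiv.apply_symm_apply]
    have hnm : n ≤ m := by
      simpa [hcard] using Finset.card_le_card (Finset.subset_univ X)
    exact Nat.find_min' hex ⟨hnm, by linarith⟩
end
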